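/- Let u, v, w be three unit vectors in a complex inner product space. Then √(1 − |⟨u,v⟩|²) + √(1 − |⟨v,w⟩|²) ≥ √(1 − |⟨u,w⟩|²). -/

import Mathlib

open scoped InnerProductSpace
open ComplexConjugate

lemma aux_norm_sq' {E : Type*} [NormedAddCommGroup E] [InnerProductSpace ℂ E]
    {a b : E} (ha : ‖a‖ = 1) (hb : ‖b‖ = 1) :
    ‖b - (inner ℂ a b : ℂ) • a‖ ^ 2 = 1 - ‖(inner ℂ a b : ℂ)‖ ^ 2 := by
  set c : ℂ := inner ℂ a b with hc
  have h := @norm_sub_sq ℂ E _ _ _ b (c • a)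
  have h1 : (inner ℂ b (c • a) : ℂ) = c * conj c := by
    rw [inner_smul_right, ← inner_conj_symm, ← hc]
  have h2 : ‖c • a‖ ^ 2 = ‖c‖ ^ 2 := by
    rw [norm_smul, ha, mul_one]
  rw [h, h1, h2, hb]
  have h3 : Complex.re (c * conj c) = ‖c‖ ^ 2 := by
    rw [Complex.mul_conj]
    simp [Complex.sq_norm]
  have h4 : RCLike.re (c * conj c) = Complex.re (c * conj c) := rfl
  rw [h4, h3]; ring

lemma aux_contract {E : Type*} [NormedAddCommGroup E] [InnerProductSpace ℂ E]
    {a : E} (ha : ‖a‖ = 1) (x : E) :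
    ‖x - (inner ℂ a x : ℂ) • a‖ ≤ ‖x‖ := by
  set c : ℂ := inner ℂ a x with hc
  have hxa : (inner ℂ x a : ℂ) = conj c := by rw [hc, ← inner_conj_symm]
  have haa : (inner ℂ a a : ℂ) = 1 := by
    rw [inner_self_eq_norm_sq_to_K, ha]; norm_num
  have horth : (inner ℂ (x - c • a) (c • a) : ℂ) = 0 := by
    rw [inner_smul_right, inner_sub_left, inner_smul_left, hxa, haa]
    ring
  have hpyth : ‖x‖ ^ 2 = ‖x - c • a‖ ^ 2 + ‖c • a‖ ^ 2 := by
    have := norm_add_sq (𝕜 := ℂ) (x - c • a) (c • a)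
    rw [horth] at this
    simpa using this
  have hsq : ‖x - c • a‖ ^ 2 ≤ ‖x‖ ^ 2 := by nlinarith [sq_nonneg ‖c • a‖]
  nlinarith [norm_nonneg (x - c • a), norm_nonneg x]

/-- Complex version of the spherical triangle inequality for sines: for three
unit vectors `u, v, w` in a complex inner ℂ product space, with the sine of the
inter-angle of unit vectors `a, b` being `√(1 - |⟪a,b⟫|²)`, the sum of two of
the sines dominates the third. -/
theorem sineTriangleComplex {E : Type*} [NormedAddCommGroup E] [InnerProductSpace ℂ E]
    (u v w : E) (hu : ‖u‖ = 1) (hv : ‖v‖ = 1) (hw : ‖w‖ = 1) :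
    Real.sqrt (1 - ‖(inner ℂ u v : ℂ)‖ ^ 2) +
      Real.sqrt (1 - ‖(inner ℂ v w : ℂ)‖ ^ 2) ≥
      Real.sqrt (1 - ‖(inner ℂ u w : ℂ)‖ ^ 2) := by
  set c : ℂ := inner ℂ v w with hc
  set p : E := w - c • v with hp
  -- the three sines as norms
  have huv : Real.sqrt (1 - ‖(inner ℂ u v : ℂ)‖ ^ 2) = ‖v - (inner ℂ u v : ℂ) • u‖ := by
    rw [← aux_norm_sq' hu hv, Real.sqrt_sq (norm_nonneg _)]
  have hvw : Real.sqrt (1 - ‖(inner ℂ v w : ℂ)‖ ^ 2) = ‖p‖ := by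
    rw [hp, ← hc, ← aux_norm_sq' hv hw, Real.sqrt_sq (norm_nonneg _)]
  have huw : Real.sqrt (1 - ‖(inner ℂ u w : ℂ)‖ ^ 2) = ‖w - (inner ℂ u w : ℂ) • u‖ := by
    rw [← aux_norm_sq' hu hw, Real.sqrt_sq (norm_nonneg _)]
  -- decomposition of the projection of w
  have hdecomp : w - (inner ℂ u w : ℂ) • u
      = c • (v - (inner ℂ u v : ℂ) • u) + (p - (inner ℂ u p : ℂ) • u) := by
    have hw' : w = c • v + p := by rw [hp]; abel
    have hiw : (inner ℂ u w : ℂ) = c * (inner ℂ u v : ℂ) + (inner ℂ u p : ℂ) := by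
      conv_lhs => rw [hw']
      rw [inner_add_right, inner_smul_right]
    rw [hiw]
    conv_lhs => rw [hw']
    rw [smul_sub, add_smul, mul_smul]
    abel
  have hcle : ‖c‖ ≤ 1 := by
    have := norm_inner_le_norm (𝕜 := ℂ) v w
    rw [hv, hw] at this
    simpa using this
  calc Real.sqrt (1 - ‖(inner ℂ u w : ℂ)‖ ^ 2)
      = ‖w - (inner ℂ u w : ℂ) • u‖ := huw
    _ ≤ ‖c • (v - (inner ℂ u v : ℂ) • u)‖ + ‖p - (inner ℂ u p : ℂ) • u‖ := by
        rw [hdecomp]; exact norm_add_le _ _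
    _ ≤ ‖v - (inner ℂ u v : ℂ) • u‖ + ‖p‖ := by
        gcongr ?_ + ?_
        · rw [norm_smul]
          calc ‖c‖ * ‖v - (inner ℂ u v : ℂ) • u‖ ≤ 1 * ‖v - (inner ℂ u v : ℂ) • u‖ := by
                gcongr
            _ = _ := one_mul _
        · exact aux_contract hu p
    _ = Real.sqrt (1 - ‖(inner ℂ u v : ℂ)‖ ^ 2)
        + Real.sqrt (1 - ‖(inner ℂ v w : ℂ)‖ ^ 2) := by rw [huv, hvw]
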